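/- Let μ1, μ2 > 0 and ρ ≥ 0 be real numbers. Then the double Lebesgue integral ∫₀^∞∫₀^∞ 1[x < ρ]·1[y > x]·y·(1/μ1)·exp(−x/μ1)·(1/μ2)·exp(−y/μ2) dx dy equals μ2 + (μ1/(μ1+μ2))·ρ·exp(−ρ(μ1+μ2)/(μ1·μ2)) + (μ1²·μ2/(μ1+μ2)²)·exp(−ρ(μ1+μ2)/(μ1·μ2)) − μ1²·μ2/(μ1+μ2)² − ρ·exp(−ρ/μ1)·exp(−ρ/μ2) − μ2·exp(−ρ/μ1)·exp(−ρ/μ2). (Equivalently, for independent exponential random variables X with mean μ1 and X' with mean μ2, this is E[1{X < ρ, X' > X}·X'].) -/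

import Mathlib

open MeasureTheory

set_option maxHeartbeats 1000000

private lemma hasDerivAt_aux (a : ℝ) (ha : a ≠ 0) (y : ℝ) :
    HasDerivAt (fun t : ℝ => -(t / a + 1 / a ^ 2) * Real.exp (-(a * t)))
      (y * Real.exp (-(a * y))) y := by
  have h1 : HasDerivAt (fun t : ℝ => -(t / a + 1 / a ^ 2)) (-(1 / a)) y := by
    exact (((hasDerivAt_id y).div_const a).add_const (1 / a ^ 2)).neg
  have h2 : HasDerivAt (fun t : ℝ => Real.exp (-(a * t))) (Real.exp (-(a * y)) * (-a)) y := by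
    have h : HasDerivAt (fun t : ℝ => -(a * t)) (-a) y := by
      exact ((hasDerivAt_id' y).const_mul a).neg.congr_deriv (by ring)
    exact (Real.hasDerivAt_exp (-(a * y))).comp y h
  have := h1.mul h2
  refine this.congr_deriv ?_
  field_simp
  ring

private lemma tendsto_aux (a : ℝ) (ha : 0 < a) :
    Filter.Tendsto (fun t : ℝ => -(t / a + 1 / a ^ 2) * Real.exp (-(a * t)))
      Filter.atTop (nhds 0) := by
  have hat : Filter.Tendsto (fun t : ℝ => a * t) Filter.atTop Filter.atTop :=
    Filter.Tendsto.const_mul_atTop ha Filter.tendsto_id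
  have h1 : Filter.Tendsto (fun t : ℝ => (a * t) * Real.exp (-(a * t)))
      Filter.atTop (nhds 0) := by
    have := (Real.tendsto_pow_mul_exp_neg_atTop_nhds_zero 1).comp hat
    simpa [Function.comp_def] using this
  have h2 : Filter.Tendsto (fun t : ℝ => Real.exp (-(a * t))) Filter.atTop (nhds 0) :=
    Real.tendsto_exp_neg_atTop_nhds_zero.comp hat
  have key : Filter.Tendsto
      (fun t : ℝ => -((1 / a ^ 2) * ((a * t) * Real.exp (-(a * t)))
        + (1 / a ^ 2) * Real.exp (-(a * t)))) Filter.atTop (nhds 0) := by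
    have := ((h1.const_mul (1 / a ^ 2)).add (h2.const_mul (1 / a ^ 2))).neg
    simpa using this
  refine key.congr fun t => ?_
  field_simp

private lemma tail_int (a ρ : ℝ) (ha : 0 < a) (hρ : 0 ≤ ρ) :
    IntegrableOn (fun y => y * Real.exp (-(a * y))) (Set.Ioi ρ) ∧
    ∫ y in Set.Ioi ρ, y * Real.exp (-(a * y)) = (ρ / a + 1 / a ^ 2) * Real.exp (-(a * ρ)) := by
  have hderiv : ∀ x ∈ Set.Ici ρ,
      HasDerivAt (fun t : ℝ => -(t / a + 1 / a ^ 2) * Real.exp (-(a * t)))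
        (x * Real.exp (-(a * x))) x := fun x _ => hasDerivAt_aux a ha.ne' x
  have hpos : ∀ x ∈ Set.Ioi ρ, 0 ≤ x * Real.exp (-(a * x)) := fun x hx =>
    mul_nonneg (hρ.trans hx.le) (Real.exp_nonneg _)
  have hlim := tendsto_aux a ha
  refine ⟨integrableOn_Ioi_deriv_of_nonneg' hderiv hpos hlim, ?_⟩
  rw [integral_Ioi_of_hasDerivAt_of_nonneg' hderiv hpos hlim]
  ring

private lemma finite_int (a p q : ℝ) (ha : a ≠ 0) :
    ∫ y in p..q, y * Real.exp (-(a * y)) =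
      (p / a + 1 / a ^ 2) * Real.exp (-(a * p)) - (q / a + 1 / a ^ 2) * Real.exp (-(a * q)) := by
  rw [intervalIntegral.integral_eq_sub_of_hasDerivAt
    (f := fun t : ℝ => -(t / a + 1 / a ^ 2) * Real.exp (-(a * t)))
    (fun x _ => hasDerivAt_aux a ha x)
    (Continuous.intervalIntegrable (by fun_prop) p q)]
  ring

private lemma exp_int (c m : ℝ) (hc : 0 < c) (hm : 0 ≤ m) :
    ∫ x in Set.Ioo 0 m, (1 / c) * Real.exp (-x / c) = 1 - Real.exp (-m / c) := by
  rw [← MeasureTheory.integral_Ioc_eq_integral_Ioo, ← intervalIntegral.integral_of_le hm]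
  have hd : ∀ x ∈ Set.uIcc (0 : ℝ) m,
      HasDerivAt (fun t : ℝ => -Real.exp (-t / c)) ((1 / c) * Real.exp (-x / c)) x := by
    intro x _
    have h : HasDerivAt (fun t : ℝ => -t / c) (-(1 / c)) x := by
      simpa [neg_div] using ((hasDerivAt_id x).neg).div_const c
    have := ((Real.hasDerivAt_exp (-x / c)).comp x h).neg
    refine this.congr_deriv ?_
    ring
  rw [intervalIntegral.integral_eq_sub_of_hasDerivAt hd
    (Continuous.intervalIntegrable (by fun_prop) 0 m)]
  simp only [zero_div, neg_zero, Real.exp_zero, neg_div]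
  ring

/-- For independent exponentials `X` (mean `μ1`) and `X'` (mean `μ2`),
`E[1{X < ρ, X' > X}·X']` equals the stated closed form. -/
theorem exp_indicator_lt_gt_mul_snd
    (μ1 μ2 ρ : ℝ) (hμ1 : 0 < μ1) (hμ2 : 0 < μ2) (hρ : 0 ≤ ρ) :
    (∫ y in Set.Ioi (0:ℝ), ∫ x in Set.Ioi (0:ℝ),
        (if x < ρ then (1:ℝ) else 0) * (if y > x then (1:ℝ) else 0) * y *
          ((1 / μ1) * Real.exp (-x / μ1)) * ((1 / μ2) * Real.exp (-y / μ2)))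
    = μ2 + (μ1 / (μ1 + μ2)) * ρ * Real.exp (-ρ * (μ1 + μ2) / (μ1 * μ2))
      + (μ1 ^ 2 * μ2 / (μ1 + μ2) ^ 2) * Real.exp (-ρ * (μ1 + μ2) / (μ1 * μ2))
      - μ1 ^ 2 * μ2 / (μ1 + μ2) ^ 2
      - ρ * Real.exp (-ρ / μ1) * Real.exp (-ρ / μ2)
      - μ2 * Real.exp (-ρ / μ1) * Real.exp (-ρ / μ2) := by
  have hμ1' : μ1 ≠ 0 := hμ1.ne'
  have hμ2' : μ2 ≠ 0 := hμ2.ne'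
  set b : ℝ := 1 / μ1 + 1 / μ2 with hb
  have hbpos : 0 < b := by positivity
  have hs : (0:ℝ) < μ1 + μ2 := by positivity
  -- inner integral computation
  have inner : ∀ y : ℝ, 0 < y →
      (∫ x in Set.Ioi (0:ℝ),
        (if x < ρ then (1:ℝ) else 0) * (if y > x then (1:ℝ) else 0) * y *
          ((1 / μ1) * Real.exp (-x / μ1)) * ((1 / μ2) * Real.exp (-y / μ2)))
      = (y * ((1 / μ2) * Real.exp (-y / μ2))) * (1 - Real.exp (-(min ρ y) / μ1)) := by
    intro y hy
    have hfun : (fun x => (if x < ρ then (1:ℝ) else 0) * (if y > x then (1:ℝ) else 0) * y *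
          ((1 / μ1) * Real.exp (-x / μ1)) * ((1 / μ2) * Real.exp (-y / μ2)))
        = fun x => Set.indicator (Set.Iio (min ρ y))
            (fun x => (y * ((1 / μ2) * Real.exp (-y / μ2))) * ((1 / μ1) * Real.exp (-x / μ1))) x := by
      funext x
      by_cases h1 : x < ρ <;> by_cases h2 : x < y <;>
        simp [Set.indicator, lt_min_iff, h1, h2, gt_iff_lt] <;> ring
    rw [hfun, MeasureTheory.setIntegral_indicator measurableSet_Iio, Set.Ioi_inter_Iio,
      MeasureTheory.integral_const_mul, exp_int μ1 (min ρ y) hμ1 (le_min hρ hy.le)]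
  have houter : (∫ y in Set.Ioi (0:ℝ), ∫ x in Set.Ioi (0:ℝ),
        (if x < ρ then (1:ℝ) else 0) * (if y > x then (1:ℝ) else 0) * y *
          ((1 / μ1) * Real.exp (-x / μ1)) * ((1 / μ2) * Real.exp (-y / μ2)))
      = ∫ y in Set.Ioi (0:ℝ),
          (y * ((1 / μ2) * Real.exp (-y / μ2))) * (1 - Real.exp (-(min ρ y) / μ1)) := by
    exact MeasureTheory.setIntegral_congr_fun measurableSet_Ioi fun y hy => inner y hy
  rw [houter]
  set g : ℝ → ℝ := fun y =>
    (y * ((1 / μ2) * Real.exp (-y / μ2))) * (1 - Real.exp (-(min ρ y) / μ1)) with hg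
  have hgcont : Continuous g := by
    apply Continuous.mul
    · continuity
    · exact continuous_const.sub (((continuous_const.min continuous_id).neg.div_const μ1).rexp)
  obtain ⟨hint2, hval2⟩ := tail_int (1 / μ2) ρ (by positivity) hρ
  -- tail part
  set h : ℝ → ℝ := fun y =>
    ((1 / μ2) * (1 - Real.exp (-ρ / μ1))) * (y * Real.exp (-((1 / μ2) * y))) with hh
  have hEq : Set.EqOn g h (Set.Ioi ρ) := by
    intro y hy
    have hmin : min ρ y = ρ := min_eq_left (le_of_lt hy)
    simp only [hg, hh, hmin]
    rw [show -((1 / μ2) * y) = -y / μ2 by ring]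
    ring
  have hinth : IntegrableOn h (Set.Ioi ρ) :=
    hint2.const_mul ((1 / μ2) * (1 - Real.exp (-ρ / μ1)))
  have hintg2 : IntegrableOn g (Set.Ioi ρ) :=
    hinth.congr_fun (fun y hy => (hEq hy).symm) measurableSet_Ioi
  have hint1 : IntegrableOn g (Set.Ioc 0 ρ) := hgcont.integrableOn_Ioc
  have tail_val : ∫ y in Set.Ioi ρ, g y
      = ((1 / μ2) * (1 - Real.exp (-ρ / μ1)))
        * ((ρ / (1 / μ2) + 1 / (1 / μ2) ^ 2) * Real.exp (-((1 / μ2) * ρ))) := by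
    rw [MeasureTheory.setIntegral_congr_fun measurableSet_Ioi hEq]
    simp only [hh]
    rw [MeasureTheory.integral_const_mul, hval2]
  -- finite part
  have fin_eq : Set.EqOn g (fun y =>
      (1 / μ2) * (y * Real.exp (-((1 / μ2) * y))) - (1 / μ2) * (y * Real.exp (-(b * y))))
      (Set.Ioc 0 ρ) := by
    intro y hy
    have hmin : min ρ y = y := min_eq_right hy.2
    simp only [hg, hmin]
    rw [show -((1 / μ2) * y) = -y / μ2 by ring,
      show -(b * y) = -y / μ1 + -y / μ2 by rw [hb]; ring, Real.exp_add]
    ring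
  have fin_val : ∫ y in Set.Ioc 0 ρ, g y
      = (1 / μ2) * (((0:ℝ) / (1 / μ2) + 1 / (1 / μ2) ^ 2) * Real.exp (-((1 / μ2) * 0))
          - (ρ / (1 / μ2) + 1 / (1 / μ2) ^ 2) * Real.exp (-((1 / μ2) * ρ)))
        - (1 / μ2) * (((0:ℝ) / b + 1 / b ^ 2) * Real.exp (-(b * 0))
          - (ρ / b + 1 / b ^ 2) * Real.exp (-(b * ρ))) := by
    rw [MeasureTheory.setIntegral_congr_fun measurableSet_Ioc fin_eq,
      ← intervalIntegral.integral_of_le hρ,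
      intervalIntegral.integral_sub
        (Continuous.intervalIntegrable (by fun_prop) 0 ρ)
        (Continuous.intervalIntegrable (by fun_prop) 0 ρ),
      intervalIntegral.integral_const_mul, intervalIntegral.integral_const_mul,
      finite_int (1 / μ2) 0 ρ (by positivity), finite_int b 0 ρ hbpos.ne']
  have hsplit : Set.Ioc (0:ℝ) ρ ∪ Set.Ioi ρ = Set.Ioi 0 := Set.Ioc_union_Ioi_eq_Ioi hρ
  rw [← hsplit, MeasureTheory.setIntegral_union (Set.Ioc_disjoint_Ioi le_rfl)
    measurableSet_Ioi hint1 hintg2, fin_val, tail_val]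
  -- final algebra
  rw [show -((1 / μ2) * 0) = (0:ℝ) by ring, show -(b * 0) = (0:ℝ) by ring, Real.exp_zero,
    show -((1 / μ2) * ρ) = -ρ / μ2 by ring,
    show -(b * ρ) = -ρ / μ1 + -ρ / μ2 by rw [hb]; ring,
    show -ρ * (μ1 + μ2) / (μ1 * μ2) = -ρ / μ1 + -ρ / μ2 by field_simp; ring,
    Real.exp_add, hb]
  have hbne : (1:ℝ) / μ1 + 1 / μ2 ≠ 0 := by positivity
  field_simp
  ring
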